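/- (Proposition 1.6, second part.) Let (X, μ) be a probability space with μ non-atomic. Then for every measurable, measure-preserving map T : X → X there exists a sequence (A_n)_{n≥1} of measurable subsets of X with ∑_{n=1}^∞ μ(A_n) = ∞ such that for μ-almost every x ∈ X there are at most finitely many n with T^n(x) ∈ A_n. -/

import Mathlib

open MeasureTheory Filter

open scoped ENNReal

/-- Non-atomicity gives measurable sets of arbitrarily small positive measure. -/
lemma aux_small_sets {X : Type*} [MeasurableSpace X] (μ : Measure X) [IsProbabilityMeasure μ]
    (hNA : ∀ E : Set X, MeasurableSet E → 0 < μ E →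
      ∃ F : Set X, MeasurableSet F ∧ F ⊆ E ∧ 0 < μ F ∧ μ F < μ E) :
    ∀ k : ℕ, ∃ B : Set X, MeasurableSet B ∧ 0 < μ B ∧ μ B ≤ (2 : ℝ≥0∞)⁻¹ ^ k := by
  intro k
  induction k with
  | zero => exact ⟨Set.univ, MeasurableSet.univ, by simp, by simp⟩
  | succ k ih =>
    obtain ⟨B, hBm, hBpos, hBle⟩ := ih
    obtain ⟨F, hFm, hFB, hFpos, hFlt⟩ := hNA B hBm hBpos
    have hBfin : μ B ≠ ∞ := measure_ne_top μ B
    rcases le_or_gt (μ F) (μ B / 2) with h | h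
    · refine ⟨F, hFm, hFpos, ?_⟩
      calc μ F ≤ μ B / 2 := h
        _ ≤ (2 : ℝ≥0∞)⁻¹ ^ k / 2 := by gcongr
        _ = (2 : ℝ≥0∞)⁻¹ ^ (k + 1) := by
            rw [pow_succ, ENNReal.div_eq_inv_mul, mul_comm]
    · refine ⟨B \ F, hBm.diff hFm, ?_, ?_⟩
      · rw [measure_diff hFB hFm.nullMeasurableSet (ne_top_of_le_ne_top hBfin (measure_mono hFB))]
        exact tsub_pos_iff_lt.mpr hFlt
      · rw [measure_diff hFB hFm.nullMeasurableSet (ne_top_of_le_ne_top hBfin (measure_mono hFB))]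
        have h1 : μ B - μ F ≤ μ B / 2 := by
          rw [tsub_le_iff_right]
          calc μ B = μ B / 2 + μ B / 2 := (ENNReal.add_halves _).symm
            _ ≤ μ B / 2 + μ F := add_le_add_right h.le _
        calc μ B - μ F ≤ μ B / 2 := h1
          _ ≤ (2 : ℝ≥0∞)⁻¹ ^ k / 2 := by gcongr
          _ = (2 : ℝ≥0∞)⁻¹ ^ (k + 1) := by
              rw [pow_succ, ENNReal.div_eq_inv_mul, mul_comm]

theorem exists_eventually_avoided_sequence_of_nonatomic
    {X : Type*} [MeasurableSpace X] (μ : Measure X) [IsProbabilityMeasure μ]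
    (hNA : ∀ E : Set X, MeasurableSet E → 0 < μ E →
      ∃ F : Set X, MeasurableSet F ∧ F ⊆ E ∧ 0 < μ F ∧ μ F < μ E)
    (T : X → X) (hT : Measurable T) (hTm : MeasurePreserving T μ μ) :
    ∃ A : ℕ → Set X, (∀ n, MeasurableSet (A n)) ∧
      Tendsto (fun N : ℕ => ∑ n ∈ Finset.Icc 1 N, (μ (A n)).toReal) atTop atTop ∧
      ∀ᵐ x ∂μ, {n : ℕ | 0 < n ∧ T^[n] x ∈ A n}.Finite := by
  classical
  choose B hBm hBpos hBle using aux_small_sets μ hNA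
  set ε : ℕ → ℝ := fun k => (μ (B k)).toReal with hε
  have hεpos : ∀ k, 0 < ε k := fun k => ENNReal.toReal_pos (hBpos k).ne' (measure_ne_top μ _)
  set L : ℕ → ℕ := fun k => ⌈(ε k)⁻¹⌉₊ with hLdef
  have hL1 : ∀ k, 1 ≤ L k := fun k => Nat.ceil_pos.mpr (inv_pos.mpr (hεpos k))
  have hLε : ∀ k, (1 : ℝ) ≤ (L k : ℝ) * ε k := by
    intro k
    have h1 : (ε k)⁻¹ ≤ (L k : ℝ) := Nat.le_ceil _
    calc (1 : ℝ) = (ε k)⁻¹ * ε k := (inv_mul_cancel₀ (hεpos k).ne').symm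
      _ ≤ (L k : ℝ) * ε k := by gcongr
  set N : ℕ → ℕ := fun k => 1 + ∑ j ∈ Finset.range k, L j with hNdef
  have hN0 : N 0 = 1 := by simp [hNdef]
  have hNsucc : ∀ k, N (k + 1) = N k + L k := by
    intro k; simp [hNdef, Finset.sum_range_succ]; ring
  have hNmono : StrictMono N := by
    apply strictMono_nat_of_lt_succ
    intro k; rw [hNsucc]; have := hL1 k; omega
  have hNge : ∀ k, k + 1 ≤ N k := by
    intro k
    induction k with
    | zero => simp [hN0]
    | succ k ih => rw [hNsucc]; have := hL1 k; omega
  set blk : ℕ → ℕ := fun n => Nat.findGreatest (fun k => N k ≤ n) n with hblkdef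
  have hblk_le : ∀ n, 1 ≤ n → N (blk n) ≤ n := by
    intro n hn
    exact Nat.findGreatest_spec (P := fun k => N k ≤ n) (m := 0) (Nat.zero_le n)
      (by simpa [hN0] using hn)
  have hblk_lt : ∀ n, 1 ≤ n → n < N (blk n + 1) := by
    intro n hn
    by_contra h
    push_neg at h
    have h1 : blk n + 1 ≤ n := le_trans (by have := hNge (blk n + 1); omega) h
    have h2 : blk n + 1 ≤ blk n := Nat.le_findGreatest (P := fun k => N k ≤ n) h1 h
    omega
  have hblk_eq : ∀ n k, N k ≤ n → n < N (k + 1) → blk n = k := by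
    intro n k h1 h2
    have hn1 : 1 ≤ n := le_trans (by rw [← hN0]; exact hNmono.monotone (Nat.zero_le k)) h1
    have ha := hblk_le n hn1
    have hb := hblk_lt n hn1
    have hc : blk n < k + 1 := hNmono.lt_iff_lt.mp (lt_of_le_of_lt ha h2)
    have hd : k < blk n + 1 := hNmono.lt_iff_lt.mp (lt_of_le_of_lt h1 hb)
    omega
  set A : ℕ → Set X := fun n => (T^[N (blk n + 1) - 1 - n]) ⁻¹' (B (blk n)) with hAdef
  have hAm : ∀ n, MeasurableSet (A n) := fun n => (hBm _).preimage (hT.iterate _)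
  have hAμ : ∀ n, μ (A n) = μ (B (blk n)) := fun n =>
    (hTm.iterate _).measure_preimage (hBm _).nullMeasurableSet
  have hhit : ∀ n x, 1 ≤ n → (T^[n] x ∈ A n ↔ T^[N (blk n + 1) - 1] x ∈ B (blk n)) := by
    intro n x hn
    have h1 : n ≤ N (blk n + 1) - 1 := by have := hblk_lt n hn; omega
    rw [hAdef]
    simp only [Set.mem_preimage, ← Function.iterate_add_apply]
    have : N (blk n + 1) - 1 - n + n = N (blk n + 1) - 1 := by omega
    rw [this]
  refine ⟨A, hAm, ?_, ?_⟩
  · -- divergence of partial sums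
    have hblock : ∀ k, ∑ n ∈ Finset.Ico (N k) (N (k + 1)), (μ (A n)).toReal = (L k : ℝ) * ε k := by
      intro k
      have : ∀ n ∈ Finset.Ico (N k) (N (k + 1)), (μ (A n)).toReal = ε k := by
        intro n hn
        rw [Finset.mem_Ico] at hn
        rw [hAμ, hblk_eq n k hn.1 hn.2]
      rw [Finset.sum_congr rfl this, Finset.sum_const, Nat.card_Ico, hNsucc]
      simp [nsmul_eq_mul]
    have hpartial : ∀ K, ∑ n ∈ Finset.Ico (N 0) (N K), (μ (A n)).toReal
        = ∑ k ∈ Finset.range K, (L k : ℝ) * ε k := by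
      intro K
      induction K with
      | zero => simp
      | succ K ih =>
        rw [Finset.sum_range_succ, ← ih, ← hblock K,
          Finset.sum_Ico_consecutive _ (hNmono.monotone (Nat.zero_le K))
            (hNmono.monotone (Nat.le_succ K))]
    apply tendsto_atTop_atTop_of_monotone
    · intro a b hab
      apply Finset.sum_le_sum_of_subset_of_nonneg
      · exact Finset.Icc_subset_Icc_right hab
      · intro i _ _; exact ENNReal.toReal_nonneg
    · intro b
      obtain ⟨K, hK⟩ := exists_nat_ge b
      refine ⟨N K - 1, ?_⟩
      have h1 : 1 ≤ N K := le_trans (by omega) (hNge K)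
      have hIcc : Finset.Icc 1 (N K - 1) = Finset.Ico (N 0) (N K) := by
        rw [hN0, ← Finset.Ico_add_one_right_eq_Icc]
        congr 1
        omega
      rw [hIcc, hpartial]
      calc b ≤ (K : ℝ) := hK
        _ = ∑ k ∈ Finset.range K, (1 : ℝ) := by simp
        _ ≤ ∑ k ∈ Finset.range K, (L k : ℝ) * ε k := Finset.sum_le_sum (fun k _ => hLε k)
  · -- a.e. finitely many hits
    have hBC : ∀ᵐ x ∂μ, ∀ᶠ k in atTop, x ∉ (T^[N (k + 1) - 1]) ⁻¹' (B k) := by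
      apply ae_eventually_notMem
      have heq : ∀ k, μ ((T^[N (k + 1) - 1]) ⁻¹' (B k)) = μ (B k) := fun k =>
        (hTm.iterate _).measure_preimage (hBm _).nullMeasurableSet
      have : ∑' k, μ ((T^[N (k + 1) - 1]) ⁻¹' (B k)) ≤ ∑' k : ℕ, (2 : ℝ≥0∞)⁻¹ ^ k := by
        simp_rw [heq]
        exact ENNReal.tsum_le_tsum hBle
      refine ne_top_of_le_ne_top ?_ this
      rw [ENNReal.tsum_geometric]
      have h2 : (1 : ℝ≥0∞) - 2⁻¹ = 2⁻¹ :=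
        ENNReal.sub_eq_of_eq_add (by norm_num) (ENNReal.inv_two_add_inv_two).symm
      rw [h2]
      simp
    filter_upwards [hBC] with x hx
    obtain ⟨K, hK⟩ := eventually_atTop.mp hx
    apply Set.Finite.subset (Set.finite_Iio (N K))
    rintro n ⟨hn1, hn2⟩
    have hmem := (hhit n x hn1).mp hn2
    have hlt : blk n < K := by
      by_contra h
      push_neg at h
      exact hK (blk n) h hmem
    exact lt_of_lt_of_le (hblk_lt n hn1) (hNmono.monotone hlt)
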